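/- Let n ≥ 4 be an even integer and let C be a locally optimal coloring of K_n that is not a one-factorization. Then there exist two vertices x, y and a coloring C' agreeing with C on every edge not incident with x or y such that Ψ(C') < Ψ(C). -/

import Mathlib

open Finset

/-- A (not necessarily proper) coloring of the edges of `K_n` with the colors `{1, …, n-1}`
(modeled as `Fin (n-1)`).  The values on diagonal elements of `Sym2 (Fin n)` are irrelevant. -/
def EdgeColoring (n : ℕ) : Type := Sym2 (Fin n) → Fin (n - 1)

/-- `aCount C u μ` is the number of `μ`-colored edges of `C` incident with the vertex `u`. -/
def aCount {n : ℕ} (C : EdgeColoring n) (u : Fin n) (μ : Fin (n - 1)) : ℕ :=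
  (Finset.univ.filter (fun v : Fin n => v ≠ u ∧ C s(u, v) = μ)).card

/-- `Phi C = Σ_{u,μ} a_{u,μ}(C)²`. -/
def Phi {n : ℕ} (C : EdgeColoring n) : ℕ :=
  ∑ u : Fin n, ∑ μ : Fin (n - 1), (aCount C u μ) ^ 2

/-- `Psi C` is the number of unordered pairs of distinct incident edges of `K_n` receiving the
same color under `C` (counted as ordered pairs and divided by two). -/
def Psi {n : ℕ} (C : EdgeColoring n) : ℕ :=
  ((Finset.univ : Finset (Sym2 (Fin n) × Sym2 (Fin n))).filter
    (fun p => ¬ p.1.IsDiag ∧ ¬ p.2.IsDiag ∧ p.1 ≠ p.2 ∧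
      (∃ x : Fin n, x ∈ p.1 ∧ x ∈ p.2) ∧ C p.1 = C p.2)).card / 2

/-- `C'` differs from `C` on exactly one edge. -/
def DiffersOnOneEdge {n : ℕ} (C C' : EdgeColoring n) : Prop :=
  ∃ e : Sym2 (Fin n), ¬ e.IsDiag ∧ C' e ≠ C e ∧
    ∀ f : Sym2 (Fin n), ¬ f.IsDiag → f ≠ e → C' f = C f

/-- A coloring is locally optimal if no single-edge recoloring decreases `Psi`. -/
def LocallyOptimal {n : ℕ} (C : EdgeColoring n) : Prop :=
  ∀ C' : EdgeColoring n, DiffersOnOneEdge C C' → Psi C ≤ Psi C'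

/-- A one-factorization: a proper edge coloring of `K_n` with the `n-1` colors. -/
def IsOneFactorization {n : ℕ} (C : EdgeColoring n) : Prop :=
  ∀ e f : Sym2 (Fin n), ¬ e.IsDiag → ¬ f.IsDiag → e ≠ f →
    (∃ x : Fin n, x ∈ e ∧ x ∈ f) → C e ≠ C f

/-- The graph formed by the `μ`-colored edges of `C`. -/
def monoGraph {n : ℕ} (C : EdgeColoring n) (μ : Fin (n - 1)) : SimpleGraph (Fin n) where
  Adj x y := x ≠ y ∧ C s(x, y) = μ
  symm := ⟨fun x y h => ⟨h.1.symm, by rw [Sym2.eq_swap]; exact h.2⟩⟩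
  loopless := ⟨fun x h => h.1 rfl⟩

/-- An IV coloring: for every color `μ`, every connected component of the graph formed by the
`μ`-colored edges is either a single edge or a path with exactly two edges. -/
def IsIVColoring {n : ℕ} (C : EdgeColoring n) : Prop :=
  ∀ μ : Fin (n - 1), ∀ x : Fin n, (∃ y, (monoGraph C μ).Adj x y) →
    (∃ u v : Fin n, (monoGraph C μ).Adj u v ∧
        {w | (monoGraph C μ).Reachable x w} = {u, v}) ∨
    (∃ u v w : Fin n, (monoGraph C μ).Adj u v ∧ (monoGraph C μ).Adj v w ∧
        u ≠ w ∧ ¬ (monoGraph C μ).Adj u w ∧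
        {t | (monoGraph C μ).Reachable x t} = {u, v, w})

/-- `C'` is obtained from `C` by a `(u,v)`-flip. -/
def IsFlip {n : ℕ} (C C' : EdgeColoring n) (u v : Fin n) : Prop :=
  C' s(u, v) = C s(u, v) ∧
  (∀ e : Sym2 (Fin n), ¬ e.IsDiag → u ∉ e → v ∉ e → C' e = C e) ∧
  ∀ w : Fin n, w ≠ u → w ≠ v →
    ((C' s(w, u) = C s(w, u) ∧ C' s(w, v) = C s(w, v)) ∨
     (C' s(w, u) = C s(w, v) ∧ C' s(w, v) = C s(w, u)))

/-- The edges of `K_n` with both endpoints in `S`. -/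
def edgesIn {n : ℕ} (S : Finset (Fin n)) : Finset (Sym2 (Fin n)) :=
  Finset.univ.filter (fun e => ¬ e.IsDiag ∧ ∀ x : Fin n, x ∈ e → x ∈ S)

/-- `gammaColors C S`: the number of distinct colors on edges with both endpoints in `S`. -/
def gammaColors {n : ℕ} (C : EdgeColoring n) (S : Finset (Fin n)) : ℕ :=
  ((edgesIn S).image C).card

/-- The deficit `D(S) = C(|S|, 2) - γ(S)`. -/
def deficit {n : ℕ} (C : EdgeColoring n) (S : Finset (Fin n)) : ℤ :=
  (Nat.choose S.card 2 : ℤ) - gammaColors C S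

section A
variable {n : ℕ}

lemma aCount_eq_sum (C : EdgeColoring n) (u : Fin n) (μ : Fin (n-1)) :
    aCount C u μ = ∑ v : Fin n, if v ≠ u ∧ C s(u,v) = μ then 1 else 0 :=
  Finset.card_filter _ _

lemma sum_aCount (C : EdgeColoring n) (u : Fin n) :
    ∑ μ : Fin (n-1), aCount C u μ = n - 1 := by
  classical
  have h : (univ.filter (fun v : Fin n => v ≠ u)).card
      = ∑ μ : Fin (n-1), aCount C u μ := by
    refine Finset.card_eq_sum_card_fiberwise (f := fun v => C s(u,v))
      (t := univ) (fun x _ => mem_univ _) |>.trans ?_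
    refine Finset.sum_congr rfl (fun μ _ => ?_)
    rw [Finset.filter_filter]
    rfl
  rw [← h]
  have : (univ.filter (fun v : Fin n => v ≠ u)) = univ.erase u := by
    ext x; simp [Finset.mem_erase]
  rw [this, Finset.card_erase_of_mem (mem_univ _)]
  simp

lemma even_card_of_symm {α : Type*} [DecidableEq α] [Fintype α] (s : Finset (α × α))
    (hs : ∀ p ∈ s, Prod.swap p ∈ s) (hd : ∀ p ∈ s, p.1 ≠ p.2) : Even s.card := by
  classical
  obtain ⟨f, -⟩ : ∃ f : α ≃ Fin (Fintype.card α), True := ⟨Fintype.equivFin α, trivial⟩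
  have hsplit := Finset.card_filter_add_card_filter_not
    (s := s) (p := fun p => f p.1 < f p.2)
  have hcard : (s.filter (fun p => f p.1 < f p.2)).card
      = (s.filter (fun p => ¬ f p.1 < f p.2)).card := by
    refine Finset.card_bij (fun p _ => Prod.swap p) ?_ ?_ ?_
    · intro p hp
      rw [Finset.mem_filter] at hp ⊢
      exact ⟨hs p hp.1, by simp [Prod.swap]; omega⟩
    · intro p hp q hq h
      exact Prod.swap_injective h
    · intro p hp
      rw [Finset.mem_filter] at hp
      refine ⟨Prod.swap p, ?_, by simp⟩
      rw [Finset.mem_filter]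
      refine ⟨hs p hp.1, ?_⟩
      have := hd p hp.1
      have : f p.1 ≠ f p.2 := fun h => this (f.injective h)
      simp [Prod.swap]
      omega
  rw [← hsplit, hcard]
  exact ⟨_, rfl⟩

end A

section B
variable {n : ℕ}

lemma two_mul_psi (C : EdgeColoring n) : 2 * Psi C + n * (n - 1) = Phi C := by
  classical
  set P := ((Finset.univ : Finset (Sym2 (Fin n) × Sym2 (Fin n))).filter
    (fun p => ¬ p.1.IsDiag ∧ ¬ p.2.IsDiag ∧ p.1 ≠ p.2 ∧
      (∃ x : Fin n, x ∈ p.1 ∧ x ∈ p.2) ∧ C p.1 = C p.2)) with hPdef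
  set T := (univ : Finset (Fin n × Fin n × Fin n)).filter
    (fun t => t.2.1 ≠ t.1 ∧ t.2.2 ≠ t.1 ∧ t.2.1 ≠ t.2.2 ∧
      C s(t.1, t.2.1) = C s(t.1, t.2.2)) with hTdef
  have hPsi : Psi C = P.card / 2 := rfl
  have hEven : Even P.card := by
    apply even_card_of_symm
    · rintro ⟨e, f⟩ hp
      rw [hPdef, Finset.mem_filter] at hp ⊢
      obtain ⟨-, h1, h2, h3, ⟨x, hx1, hx2⟩, h5⟩ := hp
      exact ⟨mem_univ _, h2, h1, Ne.symm h3, ⟨x, hx2, hx1⟩, h5.symm⟩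
    · rintro ⟨e, f⟩ hp
      rw [hPdef, Finset.mem_filter] at hp
      exact hp.2.2.2.1
  have hPT : T.card = P.card := by
    refine Finset.card_bij (fun t _ => (s(t.1, t.2.1), s(t.1, t.2.2))) ?_ ?_ ?_
    · rintro ⟨a, b1, b2⟩ ht
      rw [hTdef, Finset.mem_filter] at ht
      obtain ⟨-, hb1, hb2, hbb, hc⟩ := ht
      rw [hPdef, Finset.mem_filter]
      refine ⟨mem_univ _, ?_, ?_, ?_, ⟨a, ?_, ?_⟩, hc⟩
      · simp only [Sym2.mk_isDiag_iff]; exact fun h => hb1 h.symm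
      · simp only [Sym2.mk_isDiag_iff]; exact fun h => hb2 h.symm
      · simp only [ne_eq, Sym2.eq_iff]
        rintro (⟨-, rfl⟩ | ⟨h1, h2⟩)
        · exact hbb rfl
        · exact hb1 h2
      · exact Sym2.mem_mk_left _ _
      · exact Sym2.mem_mk_left _ _
    · rintro ⟨a, b1, b2⟩ h1 ⟨a', b1', b2'⟩ h2 heq
      rw [hTdef, Finset.mem_filter] at h1 h2
      obtain ⟨-, hb1, hb2, hbb, -⟩ := h1
      obtain ⟨-, hb1', hb2', hbb', -⟩ := h2
      rw [Prod.mk.injEq, Sym2.eq_iff, Sym2.eq_iff] at heq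
      obtain ⟨q1, q2⟩ := heq
      dsimp only at hb1 hb2 hbb hb1' hb2' hbb' ⊢
      rcases q1 with ⟨ha, hb⟩ | ⟨ha, hb⟩ <;> rcases q2 with ⟨ha2, hb2⟩ | ⟨ha2, hb2⟩
      · simp only [Prod.ext_iff]; exact ⟨ha, hb, hb2⟩
      · exact absurd (ha2.symm.trans ha) hb2'
      · exact absurd (ha.symm.trans ha2) hb1'
      · exact absurd (ha.symm.trans ha2) hbb'
    · rintro ⟨e, f⟩ hp
      rw [hPdef, Finset.mem_filter] at hp
      obtain ⟨-, h1, h2, h3, ⟨x, hx1, hx2⟩, h5⟩ := hp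
      obtain ⟨y, rfl⟩ := Sym2.mem_iff_exists.mp hx1
      obtain ⟨z, rfl⟩ := Sym2.mem_iff_exists.mp hx2
      have hy : y ≠ x := by
        intro h; exact h1 (by simp [Sym2.mk_isDiag_iff, h])
      have hz : z ≠ x := by
        intro h; exact h2 (by simp [Sym2.mk_isDiag_iff, h])
      have hyz : y ≠ z := by rintro rfl; exact h3 rfl
      refine ⟨(x, y, z), ?_, rfl⟩
      rw [hTdef, Finset.mem_filter]
      exact ⟨mem_univ _, hy, hz, hyz, h5⟩
  have hT : T.card + n * (n - 1) = Phi C := by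
    have h1 : T.card = ∑ w : Fin n, (T.filter (fun t => t.1 = w)).card :=
      Finset.card_eq_sum_card_fiberwise (fun x _ => mem_univ _)
    have h2 : ∀ w : Fin n,
        (T.filter (fun t => t.1 = w)).card + (n - 1)
          = ∑ ν : Fin (n-1), (aCount C w ν)^2 := by
      intro w
      set Dw := (univ : Finset (Fin n × Fin n)).filter
        (fun q => q.1 ≠ w ∧ q.2 ≠ w ∧ q.1 ≠ q.2 ∧ C s(w, q.1) = C s(w, q.2)) with hDdef
      have hTD : (T.filter (fun t => t.1 = w)).card = Dw.card := by
        refine Finset.card_bij (fun t _ => t.2) ?_ ?_ ?_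
        · rintro ⟨a, b1, b2⟩ ht
          rw [Finset.mem_filter, hTdef, Finset.mem_filter] at ht
          obtain ⟨⟨-, hb1, hb2, hbb, hc⟩, rfl⟩ := ht
          rw [hDdef, Finset.mem_filter]
          exact ⟨mem_univ _, hb1, hb2, hbb, hc⟩
        · rintro ⟨a, b1, b2⟩ h1 ⟨a', b1', b2'⟩ h2 heq
          rw [Finset.mem_filter] at h1 h2
          obtain ⟨-, rfl⟩ := h1; obtain ⟨-, rfl⟩ := h2
          simpa using heq
        · rintro ⟨q1, q2⟩ hq
          rw [hDdef, Finset.mem_filter] at hq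
          obtain ⟨-, hq1, hq2, hqq, hc⟩ := hq
          refine ⟨(w, q1, q2), ?_, rfl⟩
          rw [Finset.mem_filter, hTdef, Finset.mem_filter]
          exact ⟨⟨mem_univ _, hq1, hq2, hqq, hc⟩, rfl⟩
      set Ew := (univ : Finset (Fin n × Fin n)).filter
        (fun q => q.1 ≠ w ∧ q.2 ≠ w ∧ C s(w, q.1) = C s(w, q.2)) with hEdef
      have hsplit : (Ew.filter (fun q => q.1 ≠ q.2)).card
          + (Ew.filter (fun q => ¬ q.1 ≠ q.2)).card = Ew.card :=
        Finset.card_filter_add_card_filter_not _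
      have hED : Ew.filter (fun q => q.1 ≠ q.2) = Dw := by
        rw [hEdef, hDdef, Finset.filter_filter]
        apply Finset.filter_congr
        intro q _
        constructor
        · rintro ⟨⟨a, b, c⟩, d⟩; exact ⟨a, b, d, c⟩
        · rintro ⟨a, b, d, c⟩; exact ⟨⟨a, b, c⟩, d⟩
      have hdiag : (Ew.filter (fun q => ¬ q.1 ≠ q.2)).card = n - 1 := by
        have : (Ew.filter (fun q => ¬ q.1 ≠ q.2)).card = (univ.erase w).card := by
          refine Finset.card_bij (fun q _ => q.1) ?_ ?_ ?_
          · rintro ⟨q1, q2⟩ hq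
            rw [Finset.mem_filter, hEdef, Finset.mem_filter] at hq
            exact Finset.mem_erase.mpr ⟨hq.1.2.1, mem_univ _⟩
          · rintro ⟨q1, q2⟩ h1 ⟨q1', q2'⟩ h2 heq
            rw [Finset.mem_filter] at h1 h2
            have e1 : q1 = q2 := not_ne_iff.mp h1.2
            have e2 : q1' = q2' := not_ne_iff.mp h2.2
            simp only at heq
            rw [Prod.mk.injEq]
            exact ⟨heq, by rw [← e1, ← e2, heq]⟩
          · intro v hv
            rw [Finset.mem_erase] at hv
            refine ⟨(v, v), ?_, rfl⟩
            rw [Finset.mem_filter, hEdef, Finset.mem_filter]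
            exact ⟨⟨mem_univ _, hv.1, hv.1, rfl⟩, by simp⟩
        rw [this, Finset.card_erase_of_mem (mem_univ _)]
        simp
      have hE : Ew.card = ∑ ν : Fin (n-1), (aCount C w ν)^2 := by
        have h3 : Ew.card = ∑ ν : Fin (n-1),
            (Ew.filter (fun q => C s(w, q.1) = ν)).card :=
          Finset.card_eq_sum_card_fiberwise (fun x _ => mem_univ _)
        rw [h3]
        refine Finset.sum_congr rfl (fun ν _ => ?_)
        have : Ew.filter (fun q => C s(w, q.1) = ν)
            = (univ.filter (fun v : Fin n => v ≠ w ∧ C s(w, v) = ν))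
              ×ˢ (univ.filter (fun v : Fin n => v ≠ w ∧ C s(w, v) = ν)) := by
          ext ⟨q1, q2⟩
          rw [Finset.mem_filter, hEdef, Finset.mem_filter, Finset.mem_product,
            Finset.mem_filter, Finset.mem_filter]
          constructor
          · rintro ⟨⟨-, a, b, c⟩, d⟩
            exact ⟨⟨mem_univ _, a, d⟩, ⟨mem_univ _, b, by rw [← c]; exact d⟩⟩
          · rintro ⟨⟨-, a, d⟩, ⟨-, b, e⟩⟩
            exact ⟨⟨mem_univ _, a, b, by rw [d, e]⟩, d⟩
        rw [this, Finset.card_product]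
        rw [aCount]
        ring
      rw [hTD, ← hE, ← hsplit, hED, hdiag]
    have h3 : ∑ w : Fin n, ((T.filter (fun t => t.1 = w)).card + (n-1)) = Phi C := by
      rw [Finset.sum_congr rfl (fun w _ => h2 w)]
      rfl
    rw [Finset.sum_add_distrib] at h3
    rw [h1]
    have h4 : ∑ _w : Fin n, (n - 1) = n * (n - 1) := by
      rw [Finset.sum_const, Finset.card_univ, Fintype.card_fin, smul_eq_mul]
    omega
  rw [hPsi, ← hT, ← hPT]
  obtain ⟨k, hk⟩ := hEven
  rw [← hPT] at hk
  omega

end B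

section C
variable {n : ℕ}

def recol {n : ℕ} (C : EdgeColoring n) (u v : Fin n) (ν : Fin (n-1)) : EdgeColoring n :=
  fun e => if e = s(u,v) then ν else C e

lemma recol_comm (C : EdgeColoring n) (u v : Fin n) (ν : Fin (n-1)) :
    recol C u v ν = recol C v u ν := by
  funext e
  unfold recol
  rw [Sym2.eq_swap]

lemma recol_apply_ne (C : EdgeColoring n) (u v : Fin n) (ν : Fin (n-1)) {e : Sym2 (Fin n)}
    (he : e ≠ s(u,v)) : recol C u v ν e = C e := if_neg he

lemma recol_self (C : EdgeColoring n) (u v : Fin n) (ν : Fin (n-1)) :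
    recol C u v ν s(u,v) = ν := if_pos rfl

lemma sym2_mk_ne {w x u v : Fin n} (hwu : w ≠ u) (hwv : w ≠ v) :
    (s(w,x) : Sym2 (Fin n)) ≠ s(u,v) := by
  rw [ne_eq, Sym2.eq_iff]
  rintro (⟨h, -⟩ | ⟨h, -⟩)
  exacts [hwu h, hwv h]

lemma aCount_recol_other {C : EdgeColoring n} {u v w : Fin n} {ν : Fin (n-1)}
    (hwu : w ≠ u) (hwv : w ≠ v) (τ : Fin (n-1)) :
    aCount (recol C u v ν) w τ = aCount C w τ := by
  unfold aCount
  apply congrArg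
  apply Finset.filter_congr
  intro x _
  rw [recol_apply_ne C u v ν (sym2_mk_ne hwu hwv)]

lemma aCount_recol_nu {C : EdgeColoring n} {u v : Fin n} (huv : u ≠ v) {ν : Fin (n-1)}
    (hν : ν ≠ C s(u,v)) : aCount (recol C u v ν) u ν = aCount C u ν + 1 := by
  rw [aCount_eq_sum, aCount_eq_sum]
  rw [← Finset.sum_erase_add _ _ (mem_univ v), ← Finset.sum_erase_add _ _ (mem_univ v)]
  have hpt : ∀ x ∈ univ.erase v,
      (if x ≠ u ∧ recol C u v ν s(u,x) = ν then 1 else 0)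
        = (if x ≠ u ∧ C s(u,x) = ν then 1 else 0) := by
    intro x hx
    have hxv : x ≠ v := (Finset.mem_erase.mp hx).1
    rw [recol_apply_ne C u v ν (by
      rw [ne_eq, Sym2.eq_iff]
      rintro (⟨-, h⟩ | ⟨h, -⟩)
      exacts [hxv h, huv h])]
  rw [Finset.sum_congr rfl hpt]
  have t1 : (if v ≠ u ∧ recol C u v ν s(u,v) = ν then 1 else 0) = 1 := by
    rw [recol_self]
    exact if_pos ⟨Ne.symm huv, rfl⟩
  have t2 : (if v ≠ u ∧ C s(u,v) = ν then 1 else 0) = 0 := by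
    refine if_neg ?_
    rintro ⟨-, h⟩
    exact hν h.symm
  rw [t1, t2]

lemma aCount_recol_mu {C : EdgeColoring n} {u v : Fin n} (huv : u ≠ v) {ν : Fin (n-1)}
    (hν : ν ≠ C s(u,v)) :
    aCount (recol C u v ν) u (C s(u,v)) + 1 = aCount C u (C s(u,v)) := by
  rw [aCount_eq_sum, aCount_eq_sum]
  rw [← Finset.sum_erase_add _ _ (mem_univ v), ← Finset.sum_erase_add _ _ (mem_univ v)]
  have hpt : ∀ x ∈ univ.erase v,
      (if x ≠ u ∧ recol C u v ν s(u,x) = C s(u,v) then 1 else 0)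
        = (if x ≠ u ∧ C s(u,x) = C s(u,v) then 1 else 0) := by
    intro x hx
    have hxv : x ≠ v := (Finset.mem_erase.mp hx).1
    rw [recol_apply_ne C u v ν (by
      rw [ne_eq, Sym2.eq_iff]
      rintro (⟨-, h⟩ | ⟨h, -⟩)
      exacts [hxv h, huv h])]
  rw [Finset.sum_congr rfl hpt]
  have t1 : (if v ≠ u ∧ recol C u v ν s(u,v) = C s(u,v) then 1 else 0) = 0 := by
    rw [recol_self]
    refine if_neg ?_
    rintro ⟨-, h⟩
    exact hν h
  have t2 : (if v ≠ u ∧ C s(u,v) = C s(u,v) then 1 else 0) = 1 :=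
    if_pos ⟨Ne.symm huv, rfl⟩
  rw [t1, t2]

lemma aCount_recol_tau {C : EdgeColoring n} {u v : Fin n} (huv : u ≠ v) {ν τ : Fin (n-1)}
    (hτν : τ ≠ ν) (hτμ : τ ≠ C s(u,v)) :
    aCount (recol C u v ν) u τ = aCount C u τ := by
  rw [aCount_eq_sum, aCount_eq_sum]
  refine Finset.sum_congr rfl (fun x _ => ?_)
  by_cases hxv : x = v
  · subst hxv
    rw [recol_self]
    have t1 : ¬ (x ≠ u ∧ ν = τ) := by rintro ⟨-, h⟩; exact hτν h.symm
    have t2 : ¬ (x ≠ u ∧ C s(u,x) = τ) := by rintro ⟨-, h⟩; exact hτμ h.symm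
    rw [if_neg t1, if_neg t2]
  · rw [recol_apply_ne C u v ν (by
      rw [ne_eq, Sym2.eq_iff]
      rintro (⟨-, h⟩ | ⟨h, -⟩)
      exacts [hxv h, huv h])]

lemma row_aux (C : EdgeColoring n) {u v : Fin n} (huv : u ≠ v) {ν : Fin (n-1)}
    (hν : ν ≠ C s(u,v)) :
    (∑ τ : Fin (n-1), (aCount (recol C u v ν) u τ : ℤ)^2) + 2*(aCount C u (C s(u,v)) : ℤ)
      = (∑ τ : Fin (n-1), (aCount C u τ : ℤ)^2) + 2*(aCount C u ν : ℤ) + 2 := by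
  have hνμ : ν ≠ C s(u,v) := hν
  rw [← Finset.sum_erase_add _ _ (mem_univ (C s(u,v))),
      ← Finset.sum_erase_add _ _ (mem_univ (C s(u,v)))]
  rw [← Finset.sum_erase_add _ _ (Finset.mem_erase.mpr ⟨hνμ, mem_univ ν⟩),
      ← Finset.sum_erase_add _ _ (Finset.mem_erase.mpr ⟨hνμ, mem_univ ν⟩)]
  have hcore : ∀ τ ∈ (univ.erase (C s(u,v))).erase ν,
      ((aCount (recol C u v ν) u τ : ℤ))^2 = ((aCount C u τ : ℤ))^2 := by
    intro τ hτ
    rw [Finset.mem_erase, Finset.mem_erase] at hτ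
    rw [aCount_recol_tau huv hτ.1 hτ.2.1]
  rw [Finset.sum_congr rfl hcore]
  have e1 : (aCount (recol C u v ν) u ν : ℤ) = (aCount C u ν : ℤ) + 1 := by
    exact_mod_cast aCount_recol_nu huv hν
  have e2 : (aCount (recol C u v ν) u (C s(u,v)) : ℤ) = (aCount C u (C s(u,v)) : ℤ) - 1 := by
    have h0 : (aCount (recol C u v ν) u (C s(u,v)) : ℤ) + 1 = (aCount C u (C s(u,v)) : ℤ) := by
      exact_mod_cast aCount_recol_mu huv hν
    linarith
  rw [e1, e2]
  ring

lemma phi_cast (C : EdgeColoring n) :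
    (Phi C : ℤ) = ∑ w : Fin n, ∑ τ : Fin (n-1), (aCount C w τ : ℤ)^2 := by
  unfold Phi
  push_cast
  rfl

lemma phi_recol (C : EdgeColoring n) {u v : Fin n} (huv : u ≠ v) {ν : Fin (n-1)}
    (hν : ν ≠ C s(u,v)) :
    (Phi (recol C u v ν) : ℤ)
        + 2*(aCount C u (C s(u,v)) : ℤ) + 2*(aCount C v (C s(u,v)) : ℤ)
      = (Phi C : ℤ) + 2*(aCount C u ν : ℤ) + 2*(aCount C v ν : ℤ) + 4 := by
  rw [phi_cast, phi_cast]
  rw [← Finset.sum_erase_add _ _ (mem_univ u), ← Finset.sum_erase_add _ _ (mem_univ u)]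
  rw [← Finset.sum_erase_add _ _ (Finset.mem_erase.mpr ⟨Ne.symm huv, mem_univ v⟩),
      ← Finset.sum_erase_add _ _ (Finset.mem_erase.mpr ⟨Ne.symm huv, mem_univ v⟩)]
  have hcore : ∀ w ∈ (univ.erase u).erase v,
      (∑ τ : Fin (n-1), (aCount (recol C u v ν) w τ : ℤ)^2)
        = ∑ τ : Fin (n-1), (aCount C w τ : ℤ)^2 := by
    intro w hw
    rw [Finset.mem_erase, Finset.mem_erase] at hw
    refine Finset.sum_congr rfl (fun τ _ => ?_)
    rw [aCount_recol_other hw.2.1 hw.1]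
  rw [Finset.sum_congr rfl hcore]
  have hu := row_aux C huv hν
  have hv : (∑ τ : Fin (n-1), (aCount (recol C u v ν) v τ : ℤ)^2)
        + 2*(aCount C v (C s(u,v)) : ℤ)
      = (∑ τ : Fin (n-1), (aCount C v τ : ℤ)^2) + 2*(aCount C v ν : ℤ) + 2 := by
    have hswap : (s(u,v) : Sym2 (Fin n)) = s(v,u) := Sym2.eq_swap
    have hν' : ν ≠ C s(v,u) := by rw [← hswap]; exact hν
    have := row_aux C (Ne.symm huv) hν'
    rw [recol_comm C u v ν, hswap]
    exact this
  linarith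

lemma locopt_phi {C C' : EdgeColoring n} (hC : LocallyOptimal C)
    (h : DiffersOnOneEdge C C') : Phi C ≤ Phi C' := by
  have h1 := hC C' h
  have h2 := two_mul_psi C
  have h3 := two_mul_psi C'
  omega

lemma locopt_ineq {C : EdgeColoring n} (hC : LocallyOptimal C) {u v : Fin n}
    (huv : u ≠ v) (ν : Fin (n-1)) :
    aCount C u (C s(u,v)) + aCount C v (C s(u,v))
      ≤ aCount C u ν + aCount C v ν + 2 := by
  by_cases hν : ν = C s(u,v)
  · subst hν; omega
  · have hd : DiffersOnOneEdge C (recol C u v ν) := by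
      refine ⟨s(u,v), ?_, ?_, fun f _ hf => recol_apply_ne _ _ _ _ hf⟩
      · rw [Sym2.mk_isDiag_iff]; exact huv
      · rw [recol_self]; exact hν
    have h1 := locopt_phi hC hd
    have h2 := phi_recol C huv hν
    have h3 : (Phi C : ℤ) ≤ (Phi (recol C u v ν) : ℤ) := by exact_mod_cast h1
    have : (aCount C u (C s(u,v)) : ℤ) + (aCount C v (C s(u,v)) : ℤ)
        ≤ (aCount C u ν : ℤ) + (aCount C v ν : ℤ) + 2 := by linarith
    exact_mod_cast this

lemma s_le_three {C : EdgeColoring n} (hC : LocallyOptimal C) (h4 : 4 ≤ n)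
    {u v : Fin n} (huv : u ≠ v) :
    aCount C u (C s(u,v)) + aCount C v (C s(u,v)) ≤ 3 := by
  set μ := C s(u,v) with hμ
  set A := aCount C u μ + aCount C v μ with hA
  by_contra hcon
  push_neg at hcon
  have hsum : ∑ _ν ∈ univ.erase μ, A
      ≤ ∑ ν ∈ univ.erase μ, (aCount C u ν + aCount C v ν + 2) :=
    Finset.sum_le_sum (fun ν _ => locopt_ineq hC huv ν)
  rw [Finset.sum_const, Finset.card_erase_of_mem (mem_univ _), Finset.card_univ,
    Fintype.card_fin, smul_eq_mul] at hsum
  have hXu : ∑ ν ∈ univ.erase μ, aCount C u ν + aCount C u μ = n - 1 := by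
    rw [Finset.sum_erase_add _ _ (mem_univ μ)]
    exact sum_aCount C u
  have hXv : ∑ ν ∈ univ.erase μ, aCount C v ν + aCount C v μ = n - 1 := by
    rw [Finset.sum_erase_add _ _ (mem_univ μ)]
    exact sum_aCount C v
  rw [Finset.sum_add_distrib, Finset.sum_add_distrib, Finset.sum_const,
    Finset.card_erase_of_mem (mem_univ _), Finset.card_univ, Fintype.card_fin,
    smul_eq_mul] at hsum
  have hmul : (n - 1 - 1) * 4 ≤ (n - 1 - 1) * A := Nat.mul_le_mul_left _ hcon
  omega

lemma aCount_pos {C : EdgeColoring n} {u v : Fin n} (huv : v ≠ u) :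
    1 ≤ aCount C u (C s(u,v)) := by
  rw [aCount]
  exact Finset.card_pos.mpr ⟨v, Finset.mem_filter.mpr ⟨mem_univ _, huv, rfl⟩⟩

lemma aCount_le_two {C : EdgeColoring n} (hC : LocallyOptimal C) (h4 : 4 ≤ n)
    (u : Fin n) (ρ : Fin (n-1)) : aCount C u ρ ≤ 2 := by
  by_contra h
  push_neg at h
  have hne : (univ.filter (fun v : Fin n => v ≠ u ∧ C s(u,v) = ρ)).Nonempty := by
    rw [← Finset.card_pos]
    unfold aCount at h
    omega
  obtain ⟨v, hv⟩ := hne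
  rw [Finset.mem_filter] at hv
  obtain ⟨-, hvu, hcv⟩ := hv
  have h3 := s_le_three hC h4 (Ne.symm hvu)
  have h1 : 1 ≤ aCount C v (C s(v,u)) := aCount_pos (Ne.symm hvu)
  have hsw : (s(v,u) : Sym2 (Fin n)) = s(u,v) := Sym2.eq_swap
  rw [hsw, hcv] at h1
  rw [hcv] at h3
  omega

lemma exists_deg_two {C : EdgeColoring n} (h : ¬ IsOneFactorization C) :
    ∃ u ρ, 2 ≤ aCount C u ρ := by
  unfold IsOneFactorization at h
  push_neg at h
  obtain ⟨e, f, hde, hdf, hef, ⟨x, hx1, hx2⟩, hc⟩ := h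
  obtain ⟨y, rfl⟩ := Sym2.mem_iff_exists.mp hx1
  obtain ⟨z, rfl⟩ := Sym2.mem_iff_exists.mp hx2
  have hy : y ≠ x := by
    intro hh; exact hde (by rw [Sym2.mk_isDiag_iff]; exact hh.symm)
  have hz : z ≠ x := by
    intro hh; exact hdf (by rw [Sym2.mk_isDiag_iff]; exact hh.symm)
  have hyz : y ≠ z := by rintro rfl; exact hef rfl
  refine ⟨x, C s(x,y), Finset.one_lt_card.mpr ?_⟩
  exact ⟨y, Finset.mem_filter.mpr ⟨mem_univ _, hy, rfl⟩,
    z, Finset.mem_filter.mpr ⟨mem_univ _, hz, hc.symm⟩, hyz⟩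

lemma even_col_sum (C : EdgeColoring n) (ρ : Fin (n-1)) :
    Even (∑ v : Fin n, aCount C v ρ) := by
  classical
  have h : ∑ v : Fin n, aCount C v ρ
      = ((univ : Finset (Fin n × Fin n)).filter
          (fun p => p.2 ≠ p.1 ∧ C s(p.1, p.2) = ρ)).card := by
    rw [Finset.card_filter, Fintype.sum_prod_type]
    exact Finset.sum_congr rfl (fun v _ => aCount_eq_sum C v ρ)
  rw [h]
  apply even_card_of_symm
  · rintro ⟨a, b⟩ hp
    rw [Finset.mem_filter] at hp ⊢
    obtain ⟨-, h1, h2⟩ := hp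
    dsimp only [Prod.swap_prod_mk] at *
    have hsw : (s(b,a) : Sym2 (Fin n)) = s(a,b) := Sym2.eq_swap
    exact ⟨mem_univ _, Ne.symm h1, by rw [hsw]; exact h2⟩
  · rintro ⟨a, b⟩ hp
    rw [Finset.mem_filter] at hp
    exact Ne.symm hp.2.1
  
lemma total_col_sum (C : EdgeColoring n) :
    ∑ ρ : Fin (n-1), ∑ v : Fin n, aCount C v ρ = n * (n-1) := by
  rw [Finset.sum_comm]
  rw [Finset.sum_congr rfl (fun v _ => sum_aCount C v)]
  rw [Finset.sum_const, Finset.card_univ, Fintype.card_fin, smul_eq_mul]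

end C

section BAL
variable {ι K : Type*} [DecidableEq ι] [DecidableEq K]

def c1 (W : Finset ι) (f : ι → K × K) (S : Finset ι) (τ : K) : ℕ :=
  ∑ w ∈ W, if (if w ∈ S then (f w).2 else (f w).1) = τ then 1 else 0

def c2 (W : Finset ι) (f : ι → K × K) (S : Finset ι) (τ : K) : ℕ :=
  ∑ w ∈ W, if (if w ∈ S then (f w).1 else (f w).2) = τ then 1 else 0

def GoodS (W : Finset ι) (f : ι → K × K) (S : Finset ι) : Prop :=
  ∀ τ : K, c1 W f S τ ≤ c2 W f S τ + 1 ∧ c2 W f S τ ≤ c1 W f S τ + 1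

lemma bal_transport (W : Finset ι) (f : ι → K × K) (w : ι) (hw : w ∈ W)
    (h : ∃ S ⊆ W, GoodS W (Function.update f w (f w).swap) S) :
    ∃ S ⊆ W, GoodS W f S := by
  obtain ⟨S', hsub, hgood⟩ := h
  set f' := Function.update f w (f w).swap with hf'
  refine ⟨if w ∈ S' then S'.erase w else insert w S', ?_, ?_⟩
  · by_cases h : w ∈ S' <;> simp only [h, if_true, if_false]
    · exact (Finset.erase_subset _ _).trans hsub
    · exact Finset.insert_subset hw hsub
  · set S := if w ∈ S' then S'.erase w else insert w S' with hS
    have hmem : ∀ x, x ≠ w → (x ∈ S ↔ x ∈ S') := by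
      intro x hx
      rw [hS]
      by_cases h : w ∈ S' <;> simp only [h, if_true, if_false, Finset.mem_erase,
        Finset.mem_insert, hx, false_or, ne_eq, not_false_iff, true_and]
    have hwS : (w ∈ S) ↔ ¬ (w ∈ S') := by
      rw [hS]
      by_cases h : w ∈ S' <;> simp [h]
    have e1 : ∀ τ, c1 W f S τ = c1 W f' S' τ := by
      intro τ
      refine Finset.sum_congr rfl (fun x hx => ?_)
      by_cases hxw : x = w
      · subst hxw
        by_cases h : x ∈ S'
        · have h1 : x ∉ S := by rw [hwS]; exact not_not_intro h
          rw [if_neg h1, if_pos h, hf', Function.update_self, Prod.snd_swap]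
        · have h1 : x ∈ S := hwS.mpr h
          rw [if_pos h1, if_neg h, hf', Function.update_self, Prod.fst_swap]
      · have h2 : f' x = f x := by rw [hf', Function.update_of_ne hxw]
        rw [h2]
        by_cases h : x ∈ S'
        · rw [if_pos ((hmem x hxw).mpr h), if_pos h]
        · rw [if_neg (fun hh => h ((hmem x hxw).mp hh)), if_neg h]
    have e2 : ∀ τ, c2 W f S τ = c2 W f' S' τ := by
      intro τ
      refine Finset.sum_congr rfl (fun x hx => ?_)
      by_cases hxw : x = w
      · subst hxw
        by_cases h : x ∈ S'
        · have h1 : x ∉ S := by rw [hwS]; exact not_not_intro h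
          rw [if_neg h1, if_pos h, hf', Function.update_self, Prod.fst_swap]
        · have h1 : x ∈ S := hwS.mpr h
          rw [if_pos h1, if_neg h, hf', Function.update_self, Prod.snd_swap]
      · have h2 : f' x = f x := by rw [hf', Function.update_of_ne hxw]
        rw [h2]
        by_cases h : x ∈ S'
        · rw [if_pos ((hmem x hxw).mpr h), if_pos h]
        · rw [if_neg (fun hh => h ((hmem x hxw).mp hh)), if_neg h]
    intro τ
    rw [e1 τ, e2 τ]
    exact hgood τ

lemma bal_base (W : Finset ι) (f : ι → K × K)
    (h : ∀ w1 ∈ W, ∀ w2 ∈ W, w1 ≠ w2 →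
      (f w1).1 ≠ (f w2).1 ∧ (f w1).1 ≠ (f w2).2 ∧
      (f w1).2 ≠ (f w2).1 ∧ (f w1).2 ≠ (f w2).2) :
    GoodS W f ∅ := by
  intro τ
  set N := W.filter (fun w => (f w).1 = τ ∨ (f w).2 = τ) with hN
  have hcard : N.card ≤ 1 := by
    by_contra hc
    push_neg at hc
    obtain ⟨w1, hw1, w2, hw2, hne⟩ := Finset.one_lt_card.mp hc
    rw [hN, Finset.mem_filter] at hw1 hw2
    obtain ⟨hw1W, h1⟩ := hw1
    obtain ⟨hw2W, h2⟩ := hw2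
    obtain ⟨q1, q2, q3, q4⟩ := h w1 hw1W w2 hw2W hne
    rcases h1 with h1|h1 <;> rcases h2 with h2|h2
    · exact q1 (h1.trans h2.symm)
    · exact q2 (h1.trans h2.symm)
    · exact q3 (h1.trans h2.symm)
    · exact q4 (h1.trans h2.symm)
  have hd : ((c1 W f ∅ τ : ℤ) - (c2 W f ∅ τ : ℤ))
      = ∑ w ∈ N, ((if (f w).1 = τ then (1:ℤ) else 0) - (if (f w).2 = τ then 1 else 0)) := by
    have hc1 : (c1 W f ∅ τ : ℤ) = ∑ w ∈ W, (if (f w).1 = τ then (1:ℤ) else 0) := by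
      rw [c1]
      push_cast
      refine Finset.sum_congr rfl (fun w _ => ?_)
      simp only [Finset.notMem_empty, if_false]
    have hc2 : (c2 W f ∅ τ : ℤ) = ∑ w ∈ W, (if (f w).2 = τ then (1:ℤ) else 0) := by
      rw [c2]
      push_cast
      refine Finset.sum_congr rfl (fun w _ => ?_)
      simp only [Finset.notMem_empty, if_false]
    rw [hc1, hc2, ← Finset.sum_sub_distrib]
    refine (Finset.sum_subset (Finset.filter_subset _ _) ?_).symm
    intro x hxW hxN
    rw [Finset.mem_filter] at hxN
    push_neg at hxN
    have h9 := hxN hxW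
    rw [if_neg h9.1, if_neg h9.2]
    ring
  have habs : |(c1 W f ∅ τ : ℤ) - (c2 W f ∅ τ : ℤ)| ≤ 1 := by
    rw [hd]
    calc |∑ w ∈ N, ((if (f w).1 = τ then (1:ℤ) else 0) - (if (f w).2 = τ then 1 else 0))|
        ≤ ∑ w ∈ N, |((if (f w).1 = τ then (1:ℤ) else 0) - (if (f w).2 = τ then 1 else 0))| :=
          Finset.abs_sum_le_sum_abs _ _
      _ ≤ ∑ _w ∈ N, 1 := by
          refine Finset.sum_le_sum (fun w _ => ?_)
          by_cases h1 : (f w).1 = τ <;> by_cases h2 : (f w).2 = τ <;>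
            simp [h1, h2]
      _ = (N.card : ℤ) := by rw [Finset.sum_const, nsmul_eq_mul, mul_one]
      _ ≤ 1 := by exact_mod_cast hcard
  obtain ⟨ha, hb⟩ := abs_le.mp habs
  constructor
  · have : (c1 W f ∅ τ : ℤ) ≤ (c2 W f ∅ τ : ℤ) + 1 := by linarith
    exact_mod_cast this
  · have : (c2 W f ∅ τ : ℤ) ≤ (c1 W f ∅ τ : ℤ) + 1 := by linarith
    exact_mod_cast this

lemma bal_step (m : ℕ)
    (ih : ∀ (W : Finset ι) (f : ι → K × K), W.card = m → ∃ S ⊆ W, GoodS W f S)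
    (W : Finset ι) (f : ι → K × K) (hW : W.card = m + 1)
    (w1 w2 : ι) (hw1 : w1 ∈ W) (hw2 : w2 ∈ W) (hne : w1 ≠ w2)
    (hsh : (f w1).1 = (f w2).2) :
    ∃ S ⊆ W, GoodS W f S := by
  set W' := W.erase w2 with hW'
  have hW'card : W'.card = m := by
    rw [hW', Finset.card_erase_of_mem hw2, hW]
    omega
  set f' := Function.update f w1 ((f w2).1, (f w1).2) with hf'
  obtain ⟨S', hS'sub, hgood'⟩ := ih W' f' hW'card
  have hw1' : w1 ∈ W' := Finset.mem_erase.mpr ⟨hne, hw1⟩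
  have hw2S' : w2 ∉ S' := fun h => (Finset.mem_erase.mp (hS'sub h)).1 rfl
  set S := if w1 ∈ S' then insert w2 S' else S' with hS
  have hsub : S ⊆ W := by
    have h1 : S' ⊆ W := hS'sub.trans (Finset.erase_subset _ _)
    rw [hS]
    by_cases h : w1 ∈ S' <;> simp only [h, if_true, if_false]
    · exact Finset.insert_subset hw2 h1
    · exact h1
  have hSw1 : (w1 ∈ S) ↔ (w1 ∈ S') := by
    rw [hS]
    by_cases h : w1 ∈ S' <;> simp [h, hne]
  have hSw2 : (w2 ∈ S) ↔ (w1 ∈ S') := by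
    rw [hS]
    by_cases h : w1 ∈ S' <;> simp [h, hw2S']
  have hSmem : ∀ x, x ≠ w1 → x ≠ w2 → (x ∈ S ↔ x ∈ S') := by
    intro x hx1 hx2
    rw [hS]
    by_cases h : w1 ∈ S' <;> simp [h, hx2]
  refine ⟨S, hsub, ?_⟩
  have hfw1 : f' w1 = ((f w2).1, (f w1).2) := by rw [hf', Function.update_self]
  have key : ∀ τ, c1 W f S τ = c1 W' f' S' τ + (if (f w1).1 = τ then 1 else 0)
      ∧ c2 W f S τ = c2 W' f' S' τ + (if (f w1).1 = τ then 1 else 0) := by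
    intro τ
    have split1 : ∀ (g : ι → ℕ), ∑ x ∈ W, g x = (∑ x ∈ W'.erase w1, g x) + g w1 + g w2 := by
      intro g
      rw [← Finset.sum_erase_add W g hw2, ← hW', ← Finset.sum_erase_add W' g hw1']
    have split2 : ∀ (g : ι → ℕ), ∑ x ∈ W', g x = (∑ x ∈ W'.erase w1, g x) + g w1 := by
      intro g
      rw [← Finset.sum_erase_add W' g hw1']
    have hcore : ∀ x ∈ W'.erase w1,
        ((if (if x ∈ S then (f x).2 else (f x).1) = τ then 1 else 0) : ℕ)
          = (if (if x ∈ S' then (f' x).2 else (f' x).1) = τ then 1 else 0) := by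
      intro x hx
      have hx1 : x ≠ w1 := (Finset.mem_erase.mp hx).1
      have hx2 : x ≠ w2 := (Finset.mem_erase.mp ((Finset.mem_erase.mp hx).2)).1
      have h2 : f' x = f x := by rw [hf', Function.update_of_ne hx1]
      rw [h2]
      by_cases h : x ∈ S'
      · rw [if_pos ((hSmem x hx1 hx2).mpr h), if_pos h]
      · rw [if_neg (fun hh => h ((hSmem x hx1 hx2).mp hh)), if_neg h]
    have hcore2 : ∀ x ∈ W'.erase w1,
        ((if (if x ∈ S then (f x).1 else (f x).2) = τ then 1 else 0) : ℕ)
          = (if (if x ∈ S' then (f' x).1 else (f' x).2) = τ then 1 else 0) := by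
      intro x hx
      have hx1 : x ≠ w1 := (Finset.mem_erase.mp hx).1
      have hx2 : x ≠ w2 := (Finset.mem_erase.mp ((Finset.mem_erase.mp hx).2)).1
      have h2 : f' x = f x := by rw [hf', Function.update_of_ne hx1]
      rw [h2]
      by_cases h : x ∈ S'
      · rw [if_pos ((hSmem x hx1 hx2).mpr h), if_pos h]
      · rw [if_neg (fun hh => h ((hSmem x hx1 hx2).mp hh)), if_neg h]
    constructor
    · rw [c1, c1, split1, split2, Finset.sum_congr rfl hcore]
      by_cases h : w1 ∈ S'
      · have m1 : w1 ∈ S := hSw1.mpr h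
        have m2 : w2 ∈ S := hSw2.mpr h
        rw [if_pos m1, if_pos m2, if_pos h, hfw1, ← hsh]
        try dsimp only
        try omega
      · have m1 : w1 ∉ S := fun hh => h (hSw1.mp hh)
        have m2 : w2 ∉ S := fun hh => h (hSw2.mp hh)
        rw [if_neg m1, if_neg m2, if_neg h, hfw1]
        try dsimp only
        try omega
    · rw [c2, c2, split1, split2, Finset.sum_congr rfl hcore2]
      by_cases h : w1 ∈ S'
      · have m1 : w1 ∈ S := hSw1.mpr h
        have m2 : w2 ∈ S := hSw2.mpr h
        rw [if_pos m1, if_pos m2, if_pos h, hfw1]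
        try dsimp only
        try omega
      · have m1 : w1 ∉ S := fun hh => h (hSw1.mp hh)
        have m2 : w2 ∉ S := fun hh => h (hSw2.mp hh)
        rw [if_neg m1, if_neg m2, if_neg h, hfw1, ← hsh]
        try dsimp only
        try omega
  intro τ
  obtain ⟨k1, k2⟩ := key τ
  obtain ⟨g1, g2⟩ := hgood' τ
  rw [k1, k2]
  omega

lemma bal_main : ∀ (m : ℕ) (W : Finset ι) (f : ι → K × K), W.card = m →
    ∃ S ⊆ W, GoodS W f S := by
  intro m
  induction m with
  | zero =>
    intro W f hW
    refine ⟨∅, Finset.empty_subset _, fun τ => ?_⟩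
    rw [Finset.card_eq_zero.mp hW]
    constructor <;> simp [c1, c2]
  | succ m ih =>
    intro W f hW
    by_cases hA : ∃ w1 ∈ W, ∃ w2 ∈ W, w1 ≠ w2 ∧
        ((f w1).1 = (f w2).1 ∨ (f w1).1 = (f w2).2 ∨
         (f w1).2 = (f w2).1 ∨ (f w1).2 = (f w2).2)
    · obtain ⟨w1, hw1, w2, hw2, hne, hsh⟩ := hA
      rcases hsh with h|h|h|h
      · apply bal_transport W f w2 hw2
        refine bal_step m ih W _ hW w1 w2 hw1 hw2 hne ?_
        simp only [Function.update_of_ne hne, Function.update_self, Prod.snd_swap]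
        exact h
      · exact bal_step m ih W f hW w1 w2 hw1 hw2 hne h
      · apply bal_transport W f w1 hw1
        apply bal_transport W (Function.update f w1 (f w1).swap) w2 hw2
        refine bal_step m ih W _ hW w1 w2 hw1 hw2 hne ?_
        simp only [Function.update_of_ne hne, Function.update_of_ne hne.symm,
          Function.update_self, Prod.fst_swap, Prod.snd_swap]
        exact h
      · apply bal_transport W f w1 hw1
        refine bal_step m ih W _ hW w1 w2 hw1 hw2 hne ?_
        simp only [Function.update_of_ne hne.symm, Function.update_self, Prod.fst_swap]
        exact h
    · push_neg at hA
      exact ⟨∅, Finset.empty_subset _, bal_base W f (fun w1 h1 w2 h2 hne => hA w1 h1 w2 h2 hne)⟩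

end BAL

section FLIP
variable {n : ℕ}

open scoped Classical in
noncomputable def flipC {n : ℕ} (C : EdgeColoring n) (u v : Fin n) (S : Finset (Fin n)) :
    EdgeColoring n :=
  fun e => if ∃ w ∈ S, e = s(w,u) ∨ e = s(w,v) then C (Sym2.map (Equiv.swap u v) e) else C e

def fPair {n : ℕ} (C : EdgeColoring n) (u v : Fin n) (w : Fin n) :
    Fin (n-1) × Fin (n-1) := (C s(w,u), C s(w,v))

variable {C : EdgeColoring n} {u v : Fin n} {S : Finset (Fin n)}

lemma flipC_notuv {e : Sym2 (Fin n)} (hu : u ∉ e) (hv : v ∉ e) : flipC C u v S e = C e := by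
  rw [flipC, if_neg]
  rintro ⟨w, hw, rfl | rfl⟩
  · exact hu (Sym2.mem_mk_right _ _)
  · exact hv (Sym2.mem_mk_right _ _)

lemma flipC_uv (huv : u ≠ v) (hS : ∀ w ∈ S, w ≠ u ∧ w ≠ v) :
    flipC C u v S s(u,v) = C s(u,v) := by
  rw [flipC, if_neg]
  rintro ⟨w, hw, h | h⟩
  · rw [Sym2.eq_iff] at h
    rcases h with ⟨-, h⟩ | ⟨-, h⟩
    · exact huv h.symm
    · exact (hS w hw).2 h.symm
  · rw [Sym2.eq_iff] at h
    rcases h with ⟨h, -⟩ | ⟨h, -⟩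
    · exact (hS w hw).1 h.symm
    · exact huv h

lemma flipC_wu (huv : u ≠ v) (hS : ∀ w ∈ S, w ≠ u ∧ w ≠ v)
    {w : Fin n} (hwu : w ≠ u) (hwv : w ≠ v) :
    flipC C u v S s(w,u) = if w ∈ S then C s(w,v) else C s(w,u) := by
  have hmap : Sym2.map (Equiv.swap u v) (s(w,u) : Sym2 (Fin n)) = s(w,v) := by
    rw [Sym2.map_pair_eq, Equiv.swap_apply_left, Equiv.swap_apply_of_ne_of_ne hwu hwv]
  by_cases h : w ∈ S
  · rw [flipC, if_pos ⟨w, h, Or.inl rfl⟩, hmap, if_pos h]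
  · rw [if_neg h, flipC, if_neg]
    rintro ⟨w', hw', hh | hh⟩
    · rw [Sym2.eq_iff] at hh
      rcases hh with ⟨hh1, -⟩ | ⟨hh1, hh2⟩
      · exact h (hh1 ▸ hw')
      · exact (hS w' hw').1 hh2.symm
    · rw [Sym2.eq_iff] at hh
      rcases hh with ⟨-, hh⟩ | ⟨hh, -⟩
      · exact huv hh
      · exact hwv hh

lemma flipC_wv (huv : u ≠ v) (hS : ∀ w ∈ S, w ≠ u ∧ w ≠ v)
    {w : Fin n} (hwu : w ≠ u) (hwv : w ≠ v) :
    flipC C u v S s(w,v) = if w ∈ S then C s(w,u) else C s(w,v) := by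
  have hmap : Sym2.map (Equiv.swap u v) (s(w,v) : Sym2 (Fin n)) = s(w,u) := by
    rw [Sym2.map_pair_eq, Equiv.swap_apply_right, Equiv.swap_apply_of_ne_of_ne hwu hwv]
  by_cases h : w ∈ S
  · rw [flipC, if_pos ⟨w, h, Or.inr rfl⟩, hmap, if_pos h]
  · rw [if_neg h, flipC, if_neg]
    rintro ⟨w', hw', hh | hh⟩
    · rw [Sym2.eq_iff] at hh
      rcases hh with ⟨-, hh⟩ | ⟨hh, -⟩
      · exact huv hh.symm
      · exact hwu hh
    · rw [Sym2.eq_iff] at hh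
      rcases hh with ⟨hh1, -⟩ | ⟨hh1, hh2⟩
      · exact h (hh1 ▸ hw')
      · exact (hS w' hw').2 hh2.symm

lemma flipC_edge_x {x y : Fin n} (hxu : x ≠ u) (hxv : x ≠ v) (hyu : y ≠ u) (hyv : y ≠ v) :
    flipC C u v S s(x,y) = C s(x,y) := by
  refine flipC_notuv ?_ ?_ <;> rw [Sym2.mem_iff]
  · rintro (h|h)
    exacts [hxu h.symm, hyu h.symm]
  · rintro (h|h)
    exacts [hxv h.symm, hyv h.symm]

lemma aCount_flipC_other (huv : u ≠ v) (hS : ∀ w ∈ S, w ≠ u ∧ w ≠ v)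
    {x : Fin n} (hxu : x ≠ u) (hxv : x ≠ v) (τ : Fin (n-1)) :
    aCount (flipC C u v S) x τ = aCount C x τ := by
  rw [aCount_eq_sum, aCount_eq_sum]
  by_cases hxS : x ∈ S
  · refine Fintype.sum_equiv (Equiv.swap u v) _ _ (fun y => ?_)
    by_cases hyu : y = u
    · rw [hyu, Equiv.swap_apply_left]
      rw [flipC_wu huv hS hxu hxv, if_pos hxS]
      have hiff : (u ≠ x ∧ C s(x,v) = τ) ↔ (v ≠ x ∧ C s(x,v) = τ) := by
        constructor <;> rintro ⟨-, hh⟩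
        · exact ⟨Ne.symm hxv, hh⟩
        · exact ⟨Ne.symm hxu, hh⟩
      rw [if_congr hiff rfl rfl]
    · by_cases hyv : y = v
      · rw [hyv, Equiv.swap_apply_right]
        rw [flipC_wv huv hS hxu hxv, if_pos hxS]
        have hiff : (v ≠ x ∧ C s(x,u) = τ) ↔ (u ≠ x ∧ C s(x,u) = τ) := by
          constructor <;> rintro ⟨-, hh⟩
          · exact ⟨Ne.symm hxu, hh⟩
          · exact ⟨Ne.symm hxv, hh⟩
        rw [if_congr hiff rfl rfl]
      · rw [Equiv.swap_apply_of_ne_of_ne hyu hyv,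
          flipC_edge_x hxu hxv (fun h => hyu h) (fun h => hyv h)]
  · refine Finset.sum_congr rfl (fun y _ => ?_)
    by_cases hyu : y = u
    · rw [hyu, flipC_wu huv hS hxu hxv, if_neg hxS]
    · by_cases hyv : y = v
      · rw [hyv, flipC_wv huv hS hxu hxv, if_neg hxS]
      · rw [flipC_edge_x hxu hxv (fun h => hyu h) (fun h => hyv h)]

lemma aCount_flipC_u (huv : u ≠ v) (hS : ∀ w ∈ S, w ≠ u ∧ w ≠ v) (τ : Fin (n-1)) :
    aCount (flipC C u v S) u τ
      = c1 ((univ.erase u).erase v) (fPair C u v) S τ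
        + (if C s(u,v) = τ then 1 else 0) := by
  rw [aCount_eq_sum]
  have hvmem : v ∈ univ.erase u := Finset.mem_erase.mpr ⟨Ne.symm huv, mem_univ _⟩
  rw [← Finset.sum_erase_add _ _ (mem_univ u), ← Finset.sum_erase_add _ _ hvmem]
  have t0 : (if u ≠ u ∧ flipC C u v S s(u,u) = τ then 1 else 0) = 0 := by
    rw [if_neg]; rintro ⟨h, -⟩; exact h rfl
  have t1 : (if v ≠ u ∧ flipC C u v S s(u,v) = τ then 1 else 0)
      = (if C s(u,v) = τ then 1 else 0) := by
    rw [flipC_uv huv hS]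
    by_cases h : C s(u,v) = τ
    · rw [if_pos ⟨Ne.symm huv, h⟩, if_pos h]
    · rw [if_neg (fun hh => h hh.2), if_neg h]
  have hcore : ∀ w ∈ (univ.erase u).erase v,
      (if w ≠ u ∧ flipC C u v S s(u,w) = τ then 1 else 0)
        = (if (if w ∈ S then (fPair C u v w).2 else (fPair C u v w).1) = τ
            then 1 else 0) := by
    intro w hw
    have hwv : w ≠ v := (Finset.mem_erase.mp hw).1
    have hwu : w ≠ u := (Finset.mem_erase.mp ((Finset.mem_erase.mp hw).2)).1
    have hsw : (s(u,w) : Sym2 (Fin n)) = s(w,u) := Sym2.eq_swap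
    rw [hsw, flipC_wu huv hS hwu hwv, fPair]
    by_cases h : w ∈ S
    · rw [if_pos h]
      by_cases hh : C s(w,v) = τ
      · rw [if_pos ⟨hwu, hh⟩, if_pos hh]
      · rw [if_neg (fun hc => hh hc.2), if_neg hh]
    · rw [if_neg h]
      by_cases hh : C s(w,u) = τ
      · rw [if_pos ⟨hwu, hh⟩, if_pos hh]
      · rw [if_neg (fun hc => hh hc.2), if_neg hh]
  rw [t0, t1, c1, Finset.sum_congr rfl hcore]
  omega

lemma aCount_flipC_v (huv : u ≠ v) (hS : ∀ w ∈ S, w ≠ u ∧ w ≠ v) (τ : Fin (n-1)) :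
    aCount (flipC C u v S) v τ
      = c2 ((univ.erase u).erase v) (fPair C u v) S τ
        + (if C s(u,v) = τ then 1 else 0) := by
  rw [aCount_eq_sum]
  have humem : u ∈ univ.erase v := Finset.mem_erase.mpr ⟨huv, mem_univ _⟩
  rw [← Finset.sum_erase_add _ _ (mem_univ v), ← Finset.sum_erase_add _ _ humem]
  have t0 : (if v ≠ v ∧ flipC C u v S s(v,v) = τ then 1 else 0) = 0 := by
    rw [if_neg]; rintro ⟨h, -⟩; exact h rfl
  have t1 : (if u ≠ v ∧ flipC C u v S s(v,u) = τ then 1 else 0)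
      = (if C s(u,v) = τ then 1 else 0) := by
    have hsw : (s(v,u) : Sym2 (Fin n)) = s(u,v) := Sym2.eq_swap
    rw [hsw, flipC_uv huv hS]
    by_cases h : C s(u,v) = τ
    · rw [if_pos ⟨huv, h⟩, if_pos h]
    · rw [if_neg (fun hh => h hh.2), if_neg h]
  have hcore : ∀ w ∈ (univ.erase v).erase u,
      (if w ≠ v ∧ flipC C u v S s(v,w) = τ then 1 else 0)
        = (if (if w ∈ S then (fPair C u v w).1 else (fPair C u v w).2) = τ
            then 1 else 0) := by
    intro w hw
    have hwu : w ≠ u := (Finset.mem_erase.mp hw).1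
    have hwv : w ≠ v := (Finset.mem_erase.mp ((Finset.mem_erase.mp hw).2)).1
    have hsw : (s(v,w) : Sym2 (Fin n)) = s(w,v) := Sym2.eq_swap
    rw [hsw, flipC_wv huv hS hwu hwv, fPair]
    by_cases h : w ∈ S
    · rw [if_pos h]
      by_cases hh : C s(w,u) = τ
      · rw [if_pos ⟨hwv, hh⟩, if_pos hh]
      · rw [if_neg (fun hc => hh hc.2), if_neg hh]
    · rw [if_neg h]
      by_cases hh : C s(w,v) = τ
      · rw [if_pos ⟨hwv, hh⟩, if_pos hh]
      · rw [if_neg (fun hc => hh hc.2), if_neg hh]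
  rw [t0, t1, c2, Finset.sum_congr rfl hcore, Finset.erase_right_comm]
  omega

lemma flipC_empty (C : EdgeColoring n) (u v : Fin n) : flipC C u v ∅ = C := by
  funext e
  rw [flipC, if_neg]
  rintro ⟨w, hw, -⟩
  exact Finset.notMem_empty _ hw

lemma c_sum_invariant {ι K : Type*} [DecidableEq ι] [DecidableEq K]
    (W : Finset ι) (f : ι → K × K) (S : Finset ι) (τ : K) :
    c1 W f S τ + c2 W f S τ = c1 W f ∅ τ + c2 W f ∅ τ := by
  rw [c1, c2, c1, c2, ← Finset.sum_add_distrib, ← Finset.sum_add_distrib]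
  refine Finset.sum_congr rfl (fun w _ => ?_)
  by_cases h : w ∈ S
  · rw [if_pos h, if_pos h]
    simp only [Finset.notMem_empty, if_false]
    omega
  · rw [if_neg h, if_neg h]
    simp only [Finset.notMem_empty, if_false]

lemma quad_le (x y b c t : ℕ) (hsum : x + y = b + c) (h1 : x ≤ y + 1) (h2 : y ≤ x + 1) :
    (x+t)^2 + (y+t)^2 ≤ (b+t)^2 + (c+t)^2 := by
  by_cases hbc : b = c
  · have hx : x = b := by omega
    have hy : y = c := by omega
    rw [hx, hy]
  · have e1 : ((x:ℤ) - y)^2 ≤ 1 := by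
      have d1 : (-1:ℤ) ≤ (x:ℤ) - y := by push_cast; omega
      have d2 : (x:ℤ) - y ≤ 1 := by push_cast; omega
      nlinarith
    have e2 : 1 ≤ ((b:ℤ) - c)^2 := by
      have h9 : (b:ℤ) - c ≤ -1 ∨ 1 ≤ (b:ℤ) - c := by
        have hbc' : b ≠ c := hbc
        omega
      rcases h9 with h|h <;> nlinarith
    have hxy : (x:ℤ) + y = (b:ℤ) + c := by exact_mod_cast hsum
    have key1 : 2*((x:ℤ)+t)^2 + 2*((y:ℤ)+t)^2 = ((x:ℤ)+y+2*t)^2 + ((x:ℤ)-y)^2 := by ring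
    have key2 : 2*((b:ℤ)+t)^2 + 2*((c:ℤ)+t)^2 = ((b:ℤ)+c+2*t)^2 + ((b:ℤ)-c)^2 := by ring
    have key3 : ((x:ℤ)+y+2*t)^2 = ((b:ℤ)+c+2*t)^2 := by rw [hxy]
    have final : ((x:ℤ)+t)^2 + ((y:ℤ)+t)^2 ≤ ((b:ℤ)+t)^2 + ((c:ℤ)+t)^2 := by linarith
    exact_mod_cast final

lemma flip_improve {C : EdgeColoring n} {u v : Fin n} (huv : u ≠ v) {ρ0 : Fin (n-1)}
    (h2 : aCount C u ρ0 = 2) (h0 : aCount C v ρ0 = 0) :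
    ∃ C' : EdgeColoring n,
      (∀ e : Sym2 (Fin n), u ∉ e → v ∉ e → C' e = C e) ∧ Phi C' < Phi C := by
  classical
  obtain ⟨S, hSsub, hGood⟩ :=
    bal_main ((univ.erase u).erase v).card ((univ.erase u).erase v) (fPair C u v) rfl
  have hSmem : ∀ w ∈ S, w ≠ u ∧ w ≠ v := by
    intro w hw
    have h9 := hSsub hw
    rw [Finset.mem_erase, Finset.mem_erase] at h9
    exact ⟨h9.2.1, h9.1⟩
  refine ⟨flipC C u v S, fun e hu hv => flipC_notuv hu hv, ?_⟩
  have hsplitPhi : ∀ D : EdgeColoring n,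
      Phi D = (∑ w ∈ (univ.erase u).erase v, ∑ τ : Fin (n-1), (aCount D w τ)^2)
        + (∑ τ : Fin (n-1), (aCount D v τ)^2) + (∑ τ : Fin (n-1), (aCount D u τ)^2) := by
    intro D
    rw [Phi, ← Finset.sum_erase_add _ _ (mem_univ u),
      ← Finset.sum_erase_add _ _ (Finset.mem_erase.mpr ⟨Ne.symm huv, mem_univ v⟩)]
  rw [hsplitPhi (flipC C u v S), hsplitPhi C]
  have hcore : ∀ w ∈ (univ.erase u).erase v,
      ∑ τ : Fin (n-1), (aCount (flipC C u v S) w τ)^2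
        = ∑ τ : Fin (n-1), (aCount C w τ)^2 := by
    intro w hw
    rw [Finset.mem_erase, Finset.mem_erase] at hw
    exact Finset.sum_congr rfl (fun τ _ =>
      by rw [aCount_flipC_other huv hSmem hw.2.1 hw.1])
  rw [Finset.sum_congr rfl hcore]
  have hCu : ∀ τ, aCount C u τ
      = c1 ((univ.erase u).erase v) (fPair C u v) ∅ τ + (if C s(u,v) = τ then 1 else 0) := by
    intro τ
    have h9 := aCount_flipC_u (C := C) (S := (∅ : Finset (Fin n))) huv
      (fun w hw => absurd hw (Finset.notMem_empty _)) τ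
    rw [flipC_empty] at h9
    exact h9
  have hCv : ∀ τ, aCount C v τ
      = c2 ((univ.erase u).erase v) (fPair C u v) ∅ τ + (if C s(u,v) = τ then 1 else 0) := by
    intro τ
    have h9 := aCount_flipC_v (C := C) (S := (∅ : Finset (Fin n))) huv
      (fun w hw => absurd hw (Finset.notMem_empty _)) τ
    rw [flipC_empty] at h9
    exact h9
  have hmain : (∑ τ : Fin (n-1), (aCount (flipC C u v S) v τ)^2)
        + (∑ τ : Fin (n-1), (aCount (flipC C u v S) u τ)^2)
      < (∑ τ : Fin (n-1), (aCount C v τ)^2) + (∑ τ : Fin (n-1), (aCount C u τ)^2) := by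
    rw [← Finset.sum_add_distrib, ← Finset.sum_add_distrib]
    refine Finset.sum_lt_sum (fun τ _ => ?_) ⟨ρ0, mem_univ _, ?_⟩
    · rw [aCount_flipC_u huv hSmem τ, aCount_flipC_v huv hSmem τ, hCu τ, hCv τ]
      have hinv := c_sum_invariant ((univ.erase u).erase v) (fPair C u v) S τ
      have hg := hGood τ
      exact quad_le (c2 ((univ.erase u).erase v) (fPair C u v) S τ)
          (c1 ((univ.erase u).erase v) (fPair C u v) S τ)
          (c2 ((univ.erase u).erase v) (fPair C u v) ∅ τ)
          (c1 ((univ.erase u).erase v) (fPair C u v) ∅ τ)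
          (if C s(u,v) = τ then 1 else 0) (by omega) hg.2 hg.1
    · rw [aCount_flipC_u huv hSmem ρ0, aCount_flipC_v huv hSmem ρ0, hCu ρ0, hCv ρ0]
      have hinv := c_sum_invariant ((univ.erase u).erase v) (fPair C u v) S ρ0
      have hg := hGood ρ0
      have hb : c1 ((univ.erase u).erase v) (fPair C u v) ∅ ρ0
          + (if C s(u,v) = ρ0 then 1 else 0) = 2 := by rw [← hCu ρ0]; exact h2
      have hc : c2 ((univ.erase u).erase v) (fPair C u v) ∅ ρ0
          + (if C s(u,v) = ρ0 then 1 else 0) = 0 := by rw [← hCv ρ0]; exact h0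
      have hi : (if C s(u,v) = ρ0 then 1 else 0) = 0 := by omega
      have hb2 : c1 ((univ.erase u).erase v) (fPair C u v) ∅ ρ0 = 2 := by omega
      have hc2 : c2 ((univ.erase u).erase v) (fPair C u v) ∅ ρ0 = 0 := by omega
      have hx : c1 ((univ.erase u).erase v) (fPair C u v) S ρ0 = 1 := by omega
      have hy : c2 ((univ.erase u).erase v) (fPair C u v) S ρ0 = 1 := by omega
      rw [hi, hb2, hc2, hx, hy]
      norm_num
  omega

end FLIP

/-- If `C` is a locally optimal coloring of `K_n` (`n ≥ 4` even) that is not a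
one-factorization, then there are two vertices `x, y` and a coloring `C'` agreeing with `C` on all
edges not incident with `x` or `y` such that `Ψ(C') < Ψ(C)`. -/
theorem exists_two_vertex_recoloring (n : ℕ) (hn : Even n) (h4 : 4 ≤ n)
    (C : EdgeColoring n) (hC : LocallyOptimal C) (hnof : ¬ IsOneFactorization C) :
    ∃ (x y : Fin n) (C' : EdgeColoring n),
      (∀ e : Sym2 (Fin n), ¬ e.IsDiag → x ∉ e → y ∉ e → C' e = C e) ∧
      Psi C' < Psi C := by
  classical
  have psi_lt : ∀ A B : EdgeColoring n, Phi A < Phi B → Psi A < Psi B := by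
    intro A B h
    have hA := two_mul_psi A
    have hB := two_mul_psi B
    omega
  obtain ⟨w0, ρs, hw0⟩ := exists_deg_two hnof
  have hle2 : ∀ u ρ, aCount C u ρ ≤ 2 := aCount_le_two hC h4
  have hw0' : aCount C w0 ρs = 2 := le_antisymm (hle2 _ _) hw0
  by_cases hz : ∃ z, aCount C z ρs = 0
  · obtain ⟨z, hz0⟩ := hz
    have hne : w0 ≠ z := by
      rintro rfl
      rw [hw0'] at hz0
      exact absurd hz0 (by norm_num)
    obtain ⟨C', hagree, hphi⟩ := flip_improve hne hw0' hz0
    exact ⟨w0, z, C', fun e _ hx hy => hagree e hx hy, psi_lt _ _ hphi⟩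
  · push_neg at hz
    have hz1 : ∀ z, 1 ≤ aCount C z ρs := fun z => Nat.one_le_iff_ne_zero.mpr (hz z)
    have hbig : n + 2 ≤ ∑ x : Fin n, aCount C x ρs := by
      have hlt : ∑ _x : Fin n, 1 < ∑ x : Fin n, aCount C x ρs :=
        Finset.sum_lt_sum (fun i _ => hz1 i) ⟨w0, mem_univ _, by omega⟩
      rw [Finset.sum_const, card_univ, Fintype.card_fin, smul_eq_mul, mul_one] at hlt
      obtain ⟨k, hk⟩ := even_col_sum C ρs
      obtain ⟨m, hm⟩ := hn
      omega
    have hsmall : ∃ σ, ∑ x : Fin n, aCount C x σ ≤ n - 2 := by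
      by_contra hcon
      push_neg at hcon
      have hall : ∀ σ : Fin (n-1), n ≤ ∑ x : Fin n, aCount C x σ := by
        intro σ
        obtain ⟨k, hk⟩ := even_col_sum C σ
        obtain ⟨m, hm⟩ := hn
        have h9 := hcon σ
        omega
      have htot := total_col_sum C
      have hge : ∑ σ : Fin (n-1), (if σ = ρs then n + 2 else n)
          ≤ ∑ σ : Fin (n-1), ∑ x : Fin n, aCount C x σ := by
        refine Finset.sum_le_sum (fun σ _ => ?_)
        by_cases h : σ = ρs
        · rw [if_pos h, h]
          exact hbig
        · rw [if_neg h]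
          exact hall σ
      have hcomp : ∑ σ : Fin (n-1), (if σ = ρs then n + 2 else n)
          = (n-1) * n + 2 := by
        have hterm : ∀ σ : Fin (n-1), (if σ = ρs then n + 2 else n)
            = n + (if σ = ρs then 2 else 0) := by
          intro σ
          by_cases h : σ = ρs <;> simp [h]
        rw [Finset.sum_congr rfl (fun σ _ => hterm σ), Finset.sum_add_distrib,
          Finset.sum_const, card_univ, Fintype.card_fin, smul_eq_mul,
          Finset.sum_ite_eq' univ ρs (fun _ => 2), if_pos (mem_univ _)]
      rw [hcomp, htot] at hge
      have h44 : 4 ≤ n := h4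
      nlinarith
    obtain ⟨σ, hσ⟩ := hsmall
    have hzero2 : ∃ z1 z2 : Fin n, z1 ≠ z2 ∧ aCount C z1 σ = 0 ∧ aCount C z2 σ = 0 := by
      have h1 : (univ.filter (fun x : Fin n => ¬ aCount C x σ = 0)).card
          ≤ ∑ x : Fin n, aCount C x σ := by
        calc (univ.filter (fun x : Fin n => ¬ aCount C x σ = 0)).card
            = ∑ x ∈ univ.filter (fun x : Fin n => ¬ aCount C x σ = 0), 1 := by
              rw [Finset.card_eq_sum_ones]
          _ ≤ ∑ x ∈ univ.filter (fun x : Fin n => ¬ aCount C x σ = 0), aCount C x σ :=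
              Finset.sum_le_sum (fun i hi => by
                rw [Finset.mem_filter] at hi
                omega)
          _ ≤ ∑ x : Fin n, aCount C x σ :=
              Finset.sum_le_sum_of_subset (Finset.filter_subset _ _)
      have h2 := Finset.card_filter_add_card_filter_not
        (s := (univ : Finset (Fin n))) (p := fun x : Fin n => aCount C x σ = 0)
      rw [Finset.card_univ, Fintype.card_fin] at h2
      have hcard2 : 1 < (univ.filter (fun x : Fin n => aCount C x σ = 0)).card := by
        omega
      obtain ⟨z1, hz1m, z2, hz2m, hne⟩ := Finset.one_lt_card.mp hcard2
      rw [Finset.mem_filter] at hz1m hz2m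
      exact ⟨z1, z2, hne, hz1m.2, hz2m.2⟩
    obtain ⟨uu, vv, huv2, hu0, hv0⟩ := hzero2
    have hρu : ∃ ρu, 2 ≤ aCount C uu ρu := by
      by_contra hcon
      push_neg at hcon
      have hlt : ∑ ρ : Fin (n-1), aCount C uu ρ < ∑ _ρ : Fin (n-1), 1 :=
        Finset.sum_lt_sum (fun ρ _ => by have := hcon ρ; omega)
          ⟨σ, mem_univ _, by rw [hu0]; omega⟩
      rw [sum_aCount, Finset.sum_const, card_univ, Fintype.card_fin, smul_eq_mul,
        mul_one] at hlt
      omega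
    obtain ⟨ρu, hρu2⟩ := hρu
    have hρu2' : aCount C uu ρu = 2 := le_antisymm (hle2 _ _) hρu2
    have hσρu : σ ≠ ρu := by
      intro h
      rw [h] at hu0
      omega
    have hxex : (univ.filter (fun y : Fin n => y ≠ uu ∧ C s(uu,y) = ρu)).Nonempty := by
      rw [← Finset.card_pos]
      have : aCount C uu ρu = (univ.filter (fun y : Fin n => y ≠ uu ∧ C s(uu,y) = ρu)).card := rfl
      omega
    obtain ⟨x, hx⟩ := hxex
    rw [Finset.mem_filter] at hx
    obtain ⟨-, hxuu, hcx⟩ := hx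
    have hxuu' : uu ≠ x := Ne.symm hxuu
    have hs3 := s_le_three hC h4 hxuu'
    rw [hcx] at hs3
    have hx1 : 1 ≤ aCount C x ρu := by
      have h9 := aCount_pos (C := C) (u := x) (v := uu) hxuu'
      have hsw : (s(x,uu) : Sym2 (Fin n)) = s(uu,x) := Sym2.eq_swap
      rw [hsw, hcx] at h9
      exact h9
    have hxρu : aCount C x ρu = 1 := by omega
    have hxσ1 : 1 ≤ aCount C x σ := by
      have h9 := locopt_ineq hC hxuu' σ
      rw [hcx] at h9
      rw [hρu2', hxρu, hu0] at h9
      omega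
    by_cases hxσ2 : aCount C x σ = 2
    · have hxvv : x ≠ vv := by
        intro h
        rw [h] at hxσ2
        rw [hxσ2] at hv0
        exact absurd hv0 (by norm_num)
      obtain ⟨C', hagree, hphi⟩ := flip_improve hxvv hxσ2 hv0
      exact ⟨x, vv, C', fun e _ h1 h2 => hagree e h1 h2, psi_lt _ _ hphi⟩
    · have hxσ : aCount C x σ = 1 := by
        have := hle2 x σ
        omega
      have hσne : σ ≠ C s(uu,x) := by rw [hcx]; exact hσρu
      have hphi1 : Phi (recol C uu x σ) = Phi C := by
        have h9 := phi_recol C hxuu' hσne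
        rw [hcx, hρu2', hxρu, hu0, hxσ] at h9
        have h10 : (Phi (recol C uu x σ) : ℤ) = (Phi C : ℤ) := by push_cast at h9; linarith
        exact_mod_cast h10
      have ha1 : aCount (recol C uu x σ) x σ = 2 := by
        rw [recol_comm]
        have h9 : σ ≠ C s(x,uu) := by
          have hsw : (s(x,uu) : Sym2 (Fin n)) = s(uu,x) := Sym2.eq_swap
          rw [hsw, hcx]
          exact hσρu
        rw [aCount_recol_nu hxuu h9, hxσ]
      have ha2 : aCount (recol C uu x σ) vv σ = 0 := by
        have hvvu : vv ≠ uu := Ne.symm huv2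
        have hvvx : vv ≠ x := by
          intro h
          rw [← h] at hxσ
          rw [hxσ] at hv0
          exact absurd hv0 (by norm_num)
        rw [aCount_recol_other hvvu hvvx]
        exact hv0
      have hxvv : x ≠ vv := by
        intro h
        rw [h] at hxσ
        rw [hxσ] at hv0
        exact absurd hv0 (by norm_num)
      obtain ⟨C2, hagree, hphi2⟩ := flip_improve (C := recol C uu x σ) hxvv ha1 ha2
      refine ⟨x, vv, C2, ?_, ?_⟩
      · intro e he hxe hvve
        rw [hagree e hxe hvve, recol_apply_ne]
        intro hh
        rw [hh] at hxe
        exact hxe (Sym2.mem_mk_right _ _)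
      · exact psi_lt _ _ (by omega)
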